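/- Let c : ℝ → ℝ satisfy (c'(u))² = 1 - c(u)⁴ and c''(u) = -2 c(u)³. Fix A ≠ 0, B ≠ 0, ω ≠ 0, φ ∈ ℝ and define x(t) = A·e^{ωt}·c(B·e^{ωt} + φ). Then x''(t) - 3ω·x'(t) + 2ω²·x(t) + 2(Bω/A)²·x(t)³ = 0 for all t. -/

import Mathlib

theorem stmt_17 (c : ℝ → ℝ) (A B ω φ : ℝ) (hA : A ≠ 0) (hB : B ≠ 0) (hω : ω ≠ 0)
    (hd : Differentiable ℝ c) (hd2 : Differentiable ℝ (deriv c))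
    (hfirst : ∀ u, (deriv c u) ^ 2 = 1 - c u ^ 4)
    (hsecond : ∀ u, deriv (deriv c) u = -2 * c u ^ 3) :
    ∀ t, deriv (deriv (fun t => A * Real.exp (ω * t) * c (B * Real.exp (ω * t) + φ))) t
        - 3 * ω * deriv (fun t => A * Real.exp (ω * t) * c (B * Real.exp (ω * t) + φ)) t
        + 2 * ω ^ 2 * (A * Real.exp (ω * t) * c (B * Real.exp (ω * t) + φ))
        + 2 * (B * ω / A) ^ 2 * (A * Real.exp (ω * t) * c (B * Real.exp (ω * t) + φ)) ^ 3
        = 0 := by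
  intro t
  have hE : ∀ s : ℝ, HasDerivAt (fun t => Real.exp (ω * t)) (Real.exp (ω * s) * ω) s := by
    intro s
    have h := HasDerivAt.exp ((hasDerivAt_id s).const_mul ω)
    simpa using h
  have hu : ∀ s : ℝ, HasDerivAt (fun t => B * Real.exp (ω * t) + φ)
      (B * (Real.exp (ω * s) * ω)) s := fun s => ((hE s).const_mul B).add_const φ
  have key : ∀ s : ℝ, HasDerivAt (fun t => A * Real.exp (ω * t) * c (B * Real.exp (ω * t) + φ))
      (A * ω * Real.exp (ω * s) * c (B * Real.exp (ω * s) + φ)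
        + A * B * ω * Real.exp (ω * s) ^ 2 * deriv c (B * Real.exp (ω * s) + φ)) s := by
    intro s
    have hc : HasDerivAt c (deriv c (B * Real.exp (ω * s) + φ)) (B * Real.exp (ω * s) + φ) :=
      (hd _).hasDerivAt
    have h := ((hE s).const_mul A).mul (hc.comp s (hu s))
    refine h.congr_deriv ?_
    simp [Function.comp]
    ring
  have hderiv1 : deriv (fun t => A * Real.exp (ω * t) * c (B * Real.exp (ω * t) + φ))
      = fun s => A * ω * Real.exp (ω * s) * c (B * Real.exp (ω * s) + φ)
        + A * B * ω * Real.exp (ω * s) ^ 2 * deriv c (B * Real.exp (ω * s) + φ) :=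
    funext fun s => (key s).deriv
  rw [hderiv1]
  have hc' : HasDerivAt c (deriv c (B * Real.exp (ω * t) + φ)) (B * Real.exp (ω * t) + φ) :=
    (hd _).hasDerivAt
  have hc'' : HasDerivAt (deriv c) (deriv (deriv c) (B * Real.exp (ω * t) + φ))
      (B * Real.exp (ω * t) + φ) := (hd2 _).hasDerivAt
  have key2 : HasDerivAt (fun s => A * ω * Real.exp (ω * s) * c (B * Real.exp (ω * s) + φ)
        + A * B * ω * Real.exp (ω * s) ^ 2 * deriv c (B * Real.exp (ω * s) + φ))
      (A * ω ^ 2 * Real.exp (ω * t) * c (B * Real.exp (ω * t) + φ)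
        + 3 * A * B * ω ^ 2 * Real.exp (ω * t) ^ 2 * deriv c (B * Real.exp (ω * t) + φ)
        + A * B ^ 2 * ω ^ 2 * Real.exp (ω * t) ^ 3
            * deriv (deriv c) (B * Real.exp (ω * t) + φ)) t := by
    have h1 := ((hE t).const_mul (A * ω)).mul (hc'.comp t (hu t))
    have h2 := ((((hE t).pow 2).const_mul (A * B * ω)).mul (hc''.comp t (hu t)))
    have h := h1.add h2
    refine h.congr_deriv ?_
    simp [Function.comp]
    ring
  rw [key2.deriv, hsecond]
  field_simp
  ring
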